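/- Let m, n ≥ 1, let the board be R = {0, …, m−1} × {0, …, n−1}, let s : R → Bool be a shading of the board that is a valid Choco Banana solution for a clue assignment containing three cells c₁, c₂, c₃ that form an L-tromino (up to rotation and reflection, {(x, y), (x+1, y), (x, y+1)} for some x, y), each carrying the same clue value p, where p is a prime number. Then all three cells c₁, c₂, c₃ are unshaded in s. -/

import Mathlib

/-- Two cells of `ℤ × ℤ` are orthogonally adjacent if they differ by a unit vector. -/
def CellAdj (p q : ℤ × ℤ) : Prop :=
  (p.1 - q.1).natAbs + (p.2 - q.2).natAbs = 1

/-- The rectangular board `{0, …, m-1} × {0, …, n-1}` inside `ℤ × ℤ`. -/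
def Board (m n : ℕ) : Set (ℤ × ℤ) :=
  {p | 0 ≤ p.1 ∧ p.1 < (m : ℤ) ∧ 0 ≤ p.2 ∧ p.2 < (n : ℤ)}

/-- The block (connected component under orthogonal adjacency within `R` of cells having the
same shading) of the cell `p` for the shading `s`. -/
def Block (R : Set (ℤ × ℤ)) (s : ℤ × ℤ → Bool) (p : ℤ × ℤ) : Set (ℤ × ℤ) :=
  {q | Relation.ReflTransGen (fun a b => a ∈ R ∧ b ∈ R ∧ CellAdj a b ∧ s a = s b) p q}

/-- A set of cells is a rectangle if it equals `{a, …, b} × {c, …, d}` with `a ≤ b`, `c ≤ d`. -/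
def IsRect (T : Set (ℤ × ℤ)) : Prop :=
  ∃ a b c d : ℤ, a ≤ b ∧ c ≤ d ∧
    T = {q : ℤ × ℤ | a ≤ q.1 ∧ q.1 ≤ b ∧ c ≤ q.2 ∧ q.2 ≤ d}

/-- A shading `s` of the `m × n` board is a valid Choco Banana solution for the (partial)
clue assignment `clue`:  every shaded block is a rectangle, no unshaded block is a rectangle,
and the block of every clued cell has exactly the clued number of cells. -/
def ValidChocoBanana (m n : ℕ) (clue : ℤ × ℤ → Option ℕ) (s : ℤ × ℤ → Bool) : Prop :=
  (∀ p ∈ Board m n, s p = true → IsRect (Block (Board m n) s p)) ∧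
  (∀ p ∈ Board m n, s p = false → ¬ IsRect (Block (Board m n) s p)) ∧
  (∀ p ∈ Board m n, ∀ k : ℕ, clue p = some k → (Block (Board m n) s p).ncard = k)

/-! ### Basic block lemmas -/

section Basic

variable {R : Set (ℤ × ℤ)} {s : ℤ × ℤ → Bool}

lemma cellAdj_symm {a b : ℤ × ℤ} (h : CellAdj a b) : CellAdj b a := by
  unfold CellAdj at *; omega

lemma block_self (u : ℤ × ℤ) : u ∈ Block R s u := Relation.ReflTransGen.refl

lemma block_shade {u q : ℤ × ℤ} (h : q ∈ Block R s u) : s q = s u := by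
  induction h with
  | refl => rfl
  | tail _ hstep ih => rw [hstep.2.2.2] at ih; exact ih

lemma block_mem_R {u q : ℤ × ℤ} (hu : u ∈ R) (h : q ∈ Block R s u) : q ∈ R := by
  induction h with
  | refl => exact hu
  | tail _ hstep _ => exact hstep.2.1

lemma block_closed {u q r : ℤ × ℤ} (h : q ∈ Block R s u) (hq : q ∈ R) (hr : r ∈ R)
    (hadj : CellAdj q r) (hs : s q = s r) : r ∈ Block R s u :=
  Relation.ReflTransGen.tail h ⟨hq, hr, hadj, hs⟩

lemma block_symmrel : Symmetric (fun a b => a ∈ R ∧ b ∈ R ∧ CellAdj a b ∧ s a = s b) := by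
  intro a b ⟨h1, h2, h3, h4⟩; exact ⟨h2, h1, cellAdj_symm h3, h4.symm⟩

lemma block_eq_of_mem {u q : ℤ × ℤ} (h : q ∈ Block R s u) : Block R s q = Block R s u := by
  ext r
  constructor
  · intro hr; exact Relation.ReflTransGen.trans h hr
  · intro hr
    exact Relation.ReflTransGen.trans ((@Relation.ReflTransGen.symmetric _ _ ⟨fun _ _ hab => block_symmrel hab⟩).symm _ _ h) hr

lemma block_subset_R {u : ℤ × ℤ} (hu : u ∈ R) : Block R s u ⊆ R := fun _ h => block_mem_R hu h

end Basic

lemma board_finite (m n : ℕ) : (Board m n).Finite := by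
  apply Set.Finite.subset (Set.finite_Icc ((0 : ℤ), (0 : ℤ)) ((m : ℤ), (n : ℤ)))
  rintro ⟨x, y⟩ ⟨h1, h2, h3, h4⟩
  simp only [Set.mem_Icc, Prod.mk_le_mk]
  omega

lemma block_finite {m n : ℕ} {s : ℤ × ℤ → Bool} {u : ℤ × ℤ} (hu : u ∈ Board m n) :
    (Block (Board m n) s u).Finite :=
  (board_finite m n).subset (block_subset_R hu)

/-! ### Segments -/

def Hseg (a b y : ℤ) : Set (ℤ × ℤ) := {q | a ≤ q.1 ∧ q.1 ≤ b ∧ q.2 = y}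

def Vseg (x c d : ℤ) : Set (ℤ × ℤ) := {q | q.1 = x ∧ c ≤ q.2 ∧ q.2 ≤ d}

lemma hseg_ncard (a b y : ℤ) : (Hseg a b y).ncard = (b + 1 - a).toNat := by
  have : Hseg a b y = ↑((Finset.Icc a b).image (fun t => ((t, y) : ℤ × ℤ))) := by
    ext ⟨qx, qy⟩
    simp only [Hseg, Set.mem_setOf_eq, Finset.coe_image, Set.mem_image, Finset.mem_coe,
      Finset.mem_Icc, Prod.mk.injEq]
    constructor
    · rintro ⟨h1, h2, h3⟩; exact ⟨qx, ⟨h1, h2⟩, rfl, h3.symm⟩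
    · rintro ⟨t, ⟨h1, h2⟩, h3, h4⟩; subst h3; exact ⟨h1, h2, h4.symm⟩
  rw [this, Set.ncard_coe_finset, Finset.card_image_of_injective _ (fun t t' h => by
    simpa using h)]
  simp [Int.card_Icc]

lemma vseg_ncard (x c d : ℤ) : (Vseg x c d).ncard = (d + 1 - c).toNat := by
  have : Vseg x c d = ↑((Finset.Icc c d).image (fun t => ((x, t) : ℤ × ℤ))) := by
    ext ⟨qx, qy⟩
    simp only [Vseg, Set.mem_setOf_eq, Finset.coe_image, Set.mem_image, Finset.mem_coe,
      Finset.mem_Icc, Prod.mk.injEq]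
    constructor
    · rintro ⟨h1, h2, h3⟩; exact ⟨qy, ⟨h2, h3⟩, h1.symm, rfl⟩
    · rintro ⟨t, ⟨h1, h2⟩, h3, h4⟩; subst h4; exact ⟨h3.symm, h1, h2⟩
  rw [this, Set.ncard_coe_finset, Finset.card_image_of_injective _ (fun t t' h => by
    simpa using h)]
  simp [Int.card_Icc]

lemma hseg_isRect {a b y : ℤ} (hab : a ≤ b) : IsRect (Hseg a b y) := by
  refine ⟨a, b, y, y, hab, le_refl y, ?_⟩
  ext q; simp only [Hseg, Set.mem_setOf_eq]; constructor
  · rintro ⟨h1, h2, h3⟩; exact ⟨h1, h2, h3.ge, h3.le⟩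
  · rintro ⟨h1, h2, h3, h4⟩; exact ⟨h1, h2, le_antisymm h4 h3⟩

/-! ### Rectangle cardinality and the line lemma -/

lemma rect_ncard (a b c d : ℤ) :
    ({q : ℤ × ℤ | a ≤ q.1 ∧ q.1 ≤ b ∧ c ≤ q.2 ∧ q.2 ≤ d}).ncard
      = (b + 1 - a).toNat * (d + 1 - c).toNat := by
  have : {q : ℤ × ℤ | a ≤ q.1 ∧ q.1 ≤ b ∧ c ≤ q.2 ∧ q.2 ≤ d}
      = ↑(Finset.Icc a b ×ˢ Finset.Icc c d) := by
    ext ⟨qx, qy⟩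
    simp only [Set.mem_setOf_eq, Finset.coe_product, Set.mem_prod, Finset.mem_coe,
      Finset.mem_Icc]
    tauto
  rw [this, Set.ncard_coe_finset, Finset.card_product]
  simp [Int.card_Icc]

/-- A shaded clued block of prime cardinality is a horizontal or vertical segment. -/
lemma block_line {m n : ℕ} {s : ℤ × ℤ → Bool} {p : ℕ} (hp : p.Prime) {u : ℤ × ℤ}
    (hrect : IsRect (Block (Board m n) s u))
    (hcard : (Block (Board m n) s u).ncard = p) :
    (∃ a, Block (Board m n) s u = Hseg a (a + p - 1) u.2 ∧ a ≤ u.1 ∧ u.1 ≤ a + p - 1) ∨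
    (∃ c, Block (Board m n) s u = Vseg u.1 c (c + p - 1) ∧ c ≤ u.2 ∧ u.2 ≤ c + p - 1) := by
  obtain ⟨a, b, c, d, hab, hcd, hT⟩ := hrect
  rw [hT, rect_ncard] at hcard
  have humem : u ∈ Block (Board m n) s u := block_self u
  rw [hT] at humem
  obtain ⟨h1, h2, h3, h4⟩ := humem
  rcases hp.eq_one_or_self_of_dvd ((b + 1 - a).toNat) ⟨_, hcard.symm⟩ with h | h
  · -- width 1 : vertical
    have hBc : (d + 1 - c).toNat = p := by
      rw [h, one_mul] at hcard; exact hcard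
    have hba : b = a := by omega
    have hdc : d = c + p - 1 := by omega
    right
    refine ⟨c, ?_, h3, by omega⟩
    rw [hT]
    have hax : a = u.1 := by omega
    ext q; simp only [Set.mem_setOf_eq, Vseg]; constructor
    · rintro ⟨q1, q2, q3, q4⟩; exact ⟨by omega, q3, by omega⟩
    · rintro ⟨q1, q2, q3⟩; exact ⟨by omega, by omega, q2, by omega⟩
  · -- width p : horizontal
    have hBc : (d + 1 - c).toNat = 1 := by
      have hp2 := hp.two_le
      have := hcard
      rw [h] at this
      nlinarith [Nat.zero_le ((d + 1 - c).toNat)]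
    have hba : b = a + p - 1 := by omega
    have hdc : d = c := by omega
    left
    refine ⟨a, ?_, h1, by omega⟩
    rw [hT]
    have hcy : c = u.2 := by omega
    ext q; simp only [Set.mem_setOf_eq, Hseg]; constructor
    · rintro ⟨q1, q2, q3, q4⟩; exact ⟨q1, by omega, by omega⟩
    · rintro ⟨q1, q2, q3⟩; exact ⟨q1, by omega, by omega, by omega⟩

/-! ### Segment connectivity -/

section Conn

variable {R : Set (ℤ × ℤ)} {s : ℤ × ℤ → Bool}

lemma hseg_conn {a b y : ℤ} {c : Bool}
    (hcell : ∀ t, a ≤ t → t ≤ b → (t, y) ∈ R ∧ s (t, y) = c) :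
    ∀ t t', a ≤ t → t ≤ b → a ≤ t' → t' ≤ b → ((t', y) : ℤ × ℤ) ∈ Block R s (t, y) := by
  have aux : ∀ k : ℕ, ∀ t, a ≤ t → t + k ≤ b → ((t + k, y) : ℤ × ℤ) ∈ Block R s (t, y) := by
    intro k
    induction k with
    | zero => intro t _ _; simpa using block_self _
    | succ k ih =>
      intro t ht htb
      have h1 := ih t ht (by omega)
      have hmem1 := hcell (t + k) (by omega) (by omega)
      have hmem2 := hcell (t + k + 1) (by omega) (by omega)
      have : ((t + k + 1, y) : ℤ × ℤ) ∈ Block R s (t, y) := by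
        refine block_closed h1 hmem1.1 hmem2.1 ?_ (by rw [hmem1.2, hmem2.2])
        simp only [CellAdj]; omega
      convert this using 2
      omega
  intro t t' ht htb ht' ht'b
  rcases le_or_gt t t' with h | h
  · have := aux (t' - t).toNat t ht (by omega)
    have heq : ((t + ((t' - t).toNat : ℤ), y) : ℤ × ℤ) = (t', y) := by
      exact Prod.ext (by omega) (by omega)
    rwa [heq] at this
  · have := aux (t - t').toNat t' ht' (by omega)
    have heq : ((t' + ((t - t').toNat : ℤ), y) : ℤ × ℤ) = (t, y) := by
      exact Prod.ext (by omega) (by omega)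
    rw [heq] at this
    rw [block_eq_of_mem this]
    exact block_self _

lemma vseg_conn {x c d : ℤ} {cb : Bool}
    (hcell : ∀ t, c ≤ t → t ≤ d → (x, t) ∈ R ∧ s (x, t) = cb) :
    ∀ t t', c ≤ t → t ≤ d → c ≤ t' → t' ≤ d → ((x, t') : ℤ × ℤ) ∈ Block R s (x, t) := by
  have aux : ∀ k : ℕ, ∀ t, c ≤ t → t + k ≤ d → ((x, t + k) : ℤ × ℤ) ∈ Block R s (x, t) := by
    intro k
    induction k with
    | zero => intro t _ _; simpa using block_self _
    | succ k ih =>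
      intro t ht htb
      have h1 := ih t ht (by omega)
      have hmem1 := hcell (t + k) (by omega) (by omega)
      have hmem2 := hcell (t + k + 1) (by omega) (by omega)
      have : ((x, t + k + 1) : ℤ × ℤ) ∈ Block R s (x, t) := by
        refine block_closed h1 hmem1.1 hmem2.1 ?_ (by rw [hmem1.2, hmem2.2])
        simp only [CellAdj]; omega
      convert this using 2
      omega
  intro t t' ht htb ht' ht'b
  rcases le_or_gt t t' with h | h
  · have := aux (t' - t).toNat t ht (by omega)
    have heq : ((x, t + ((t' - t).toNat : ℤ)) : ℤ × ℤ) = (x, t') := by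
      exact Prod.ext (by omega) (by omega)
    rwa [heq] at this
  · have := aux (t - t').toNat t' ht' (by omega)
    have heq : ((x, t' + ((t - t').toNat : ℤ)) : ℤ × ℤ) = (x, t) := by
      exact Prod.ext (by omega) (by omega)
    rw [heq] at this
    rw [block_eq_of_mem this]
    exact block_self _

end Conn

/-! ### Strips -/

lemma hseg_finite (a b y : ℤ) : (Hseg a b y).Finite := by
  apply Set.Finite.subset (Set.finite_Icc ((a, y) : ℤ × ℤ) (b, y))
  rintro ⟨qx, qy⟩ ⟨h1, h2, h3⟩
  simp only [Set.mem_Icc, Prod.mk_le_mk]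
  omega

lemma vseg_finite (x c d : ℤ) : (Vseg x c d).Finite := by
  apply Set.Finite.subset (Set.finite_Icc ((x, c) : ℤ × ℤ) (x, d))
  rintro ⟨qx, qy⟩ ⟨h1, h2, h3⟩
  simp only [Set.mem_Icc, Prod.mk_le_mk]
  omega

section Strip

variable {m n : ℕ} {s : ℤ × ℤ → Bool}

lemma block_card_contra {v : ℤ × ℤ} {p : ℕ} (hv : v ∈ Board m n)
    (hcard : (Block (Board m n) s v).ncard = p)
    {T : Set (ℤ × ℤ)} (hsub : T ⊆ Block (Board m n) s v) (hT : p < T.ncard) : False := by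
  have := Set.ncard_le_ncard hsub (block_finite hv)
  omega

/-- cells on the side of a horizontal block are on the board and unshaded -/
lemma hstrip_unshaded {u : ℤ × ℤ} {a b y' : ℤ}
    (hu : u ∈ Board m n) (hsu : s u = true)
    (hblk : Block (Board m n) s u = Hseg a b u.2)
    (hy' : (y' - u.2).natAbs = 1) (h0 : 0 ≤ y') (h1 : y' < (n : ℤ)) :
    ∀ t, a ≤ t → t ≤ b → ((t, y') ∈ Board m n ∧ s (t, y') = false) := by
  intro t ht htb
  have hmem : ((t, u.2) : ℤ × ℤ) ∈ Block (Board m n) s u := by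
    rw [hblk]; exact ⟨ht, htb, rfl⟩
  have hbd : ((t, u.2) : ℤ × ℤ) ∈ Board m n := block_mem_R hu hmem
  obtain ⟨hb1, hb2, _, _⟩ := hbd
  have hbd' : ((t, y') : ℤ × ℤ) ∈ Board m n := ⟨hb1, hb2, h0, h1⟩
  refine ⟨hbd', ?_⟩
  by_contra hc
  have hc' : s (t, y') = true := by
    cases hsy : s (t, y') with
    | false => exact absurd hsy hc
    | true => rfl
  have : ((t, y') : ℤ × ℤ) ∈ Block (Board m n) s u := by
    refine block_closed hmem (block_mem_R hu hmem) hbd' ?_ ?_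
    · unfold CellAdj; simp only []; omega
    · rw [hc', block_shade hmem, hsu]
  rw [hblk] at this
  obtain ⟨_, _, hyy⟩ := this
  simp only at hyy
  omega

/-- cells on the side of a vertical block are on the board and unshaded -/
lemma vstrip_unshaded {u : ℤ × ℤ} {c d x' : ℤ}
    (hu : u ∈ Board m n) (hsu : s u = true)
    (hblk : Block (Board m n) s u = Vseg u.1 c d)
    (hx' : (x' - u.1).natAbs = 1) (h0 : 0 ≤ x') (h1 : x' < (m : ℤ)) :
    ∀ t, c ≤ t → t ≤ d → ((x', t) : ℤ × ℤ) ∈ Board m n ∧ s (x', t) = false := by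
  intro t ht htb
  have hmem : ((u.1, t) : ℤ × ℤ) ∈ Block (Board m n) s u := by
    rw [hblk]; exact ⟨rfl, ht, htb⟩
  have hbd : ((u.1, t) : ℤ × ℤ) ∈ Board m n := block_mem_R hu hmem
  obtain ⟨_, _, hb3, hb4⟩ := hbd
  have hbd' : ((x', t) : ℤ × ℤ) ∈ Board m n := ⟨h0, h1, hb3, hb4⟩
  refine ⟨hbd', ?_⟩
  by_contra hc
  have hc' : s (x', t) = true := by
    cases hsy : s (x', t) with
    | false => exact absurd hsy hc
    | true => rfl
  have : ((x', t) : ℤ × ℤ) ∈ Block (Board m n) s u := by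
    refine block_closed hmem (block_mem_R hu hmem) hbd' ?_ ?_
    · unfold CellAdj; simp only []; omega
    · rw [hc', block_shade hmem, hsu]
  rw [hblk] at this
  obtain ⟨hxx, _, _⟩ := this
  simp only at hxx
  omega

/-- a clued unshaded cell lying in the side strip of a horizontal block of the same
cardinality gives a contradiction -/
lemma hstrip_contra {u : ℤ × ℤ} {a b y' : ℤ} {p : ℕ}
    (hnrect : ∀ q ∈ Board m n, s q = false → ¬ IsRect (Block (Board m n) s q))
    (hu : u ∈ Board m n) (hsu : s u = true)
    (hblk : Block (Board m n) s u = Hseg a b u.2)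
    (hlen : b + 1 - a = (p : ℤ)) (hp1 : 1 ≤ p)
    (hy' : (y' - u.2).natAbs = 1) (h0 : 0 ≤ y') (h1 : y' < (n : ℤ))
    (v : ℤ × ℤ) (hvmem : v ∈ Board m n) (hvcard : (Block (Board m n) s v).ncard = p)
    (hv1 : a ≤ v.1) (hv2 : v.1 ≤ b) (hvy : v.2 = y') : False := by
  obtain ⟨vx, vy⟩ := v
  simp only at hv1 hv2 hvy
  subst hvy
  have hcells := hstrip_unshaded hu hsu hblk hy' h0 h1
  have hsv : s (vx, vy) = false := (hcells vx hv1 hv2).2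
  have hsub : Hseg a b vy ⊆ Block (Board m n) s (vx, vy) := by
    rintro ⟨qx, qy⟩ ⟨hq1, hq2, hq3⟩
    simp only at hq1 hq2 hq3
    subst hq3
    exact hseg_conn hcells vx qx hv1 hv2 hq1 hq2
  have heq : Hseg a b vy = Block (Board m n) s (vx, vy) := by
    apply Set.eq_of_subset_of_ncard_le hsub _ (block_finite hvmem)
    rw [hvcard, hseg_ncard]
    omega
  exact hnrect _ hvmem hsv (heq ▸ hseg_isRect (by omega))

end Strip

/-! ### Swap transport -/

section Swap

variable {m n : ℕ} {s : ℤ × ℤ → Bool}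

lemma cellAdj_swap {a b : ℤ × ℤ} (h : CellAdj a b) : CellAdj a.swap b.swap := by
  obtain ⟨a1, a2⟩ := a; obtain ⟨b1, b2⟩ := b
  unfold CellAdj Prod.swap at *
  simp only at *
  omega

lemma board_swap {q : ℤ × ℤ} (h : q ∈ Board m n) : q.swap ∈ Board n m := by
  obtain ⟨q1, q2⟩ := q
  obtain ⟨h1, h2, h3, h4⟩ := h
  exact ⟨h3, h4, h1, h2⟩

lemma block_swap_aux {u q : ℤ × ℤ}
    (h : q ∈ Block (Board m n) s u) :
    q.swap ∈ Block (Board n m) (fun c => s c.swap) u.swap := by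
  induction h with
  | refl => exact block_self _
  | tail _ hstep ih =>
    refine Relation.ReflTransGen.tail ih ⟨board_swap hstep.1, board_swap hstep.2.1,
      cellAdj_swap hstep.2.2.1, ?_⟩
    simp only [Prod.swap_swap]
    exact hstep.2.2.2

lemma block_swap {u : ℤ × ℤ} :
    Block (Board n m) (fun c => s c.swap) u = Prod.swap ⁻¹' (Block (Board m n) s u.swap) := by
  ext q
  constructor
  · intro h
    have := block_swap_aux (s := fun c => s c.swap) (m := n) (n := m) h
    simp only [Set.mem_preimage]
    simpa only [Prod.swap_swap] using this
  · intro h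
    have := block_swap_aux (s := s) (m := m) (n := n) h
    simpa only [Prod.swap_swap] using this

lemma isRect_preimage_swap {T : Set (ℤ × ℤ)} (h : IsRect T) : IsRect (Prod.swap ⁻¹' T) := by
  obtain ⟨a, b, c, d, hab, hcd, hT⟩ := h
  refine ⟨c, d, a, b, hcd, hab, ?_⟩
  rw [hT]
  ext ⟨q1, q2⟩
  simp only [Set.mem_preimage, Prod.swap_prod_mk, Set.mem_setOf_eq]
  tauto

lemma preimage_swap_swap {T : Set (ℤ × ℤ)} : Prod.swap ⁻¹' (Prod.swap ⁻¹' T) = T := by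
  ext q; simp

lemma isRect_swap_iff {T : Set (ℤ × ℤ)} : IsRect (Prod.swap ⁻¹' T) ↔ IsRect T := by
  constructor
  · intro h
    have := isRect_preimage_swap h
    rwa [preimage_swap_swap] at this
  · exact isRect_preimage_swap

lemma ncard_preimage_swap (T : Set (ℤ × ℤ)) : (Prod.swap ⁻¹' T).ncard = T.ncard := by
  rw [← Set.image_swap_eq_preimage_swap]
  exact Set.ncard_image_of_injective _ Prod.swap_injective

end Swap

/-! ### The main worker lemma : shaded cell with horizontal block -/


lemma isolated_contra {m n : ℕ} {s : ℤ × ℤ → Bool} {p : ℕ} (hp2 : 2 ≤ p)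
    (ux uy vx vy : ℤ)
    (hvxne : vx = ux + 1 ∨ vx = ux - 1) (hvyne : vy = uy + 1 ∨ vy = uy - 1)
    (hsu : s (ux, uy) = true) (hsv' : s (vx, vy) = true) (hsw : s (vx, uy) = false)
    (hcw : (Block (Board m n) s (vx, uy)).ncard = p)
    (h3 : ¬(((vx + (vx - ux), uy) : ℤ × ℤ) ∈ Board m n ∧ s (vx + (vx - ux), uy) = false))
    (h4 : ¬(((vx, uy - (vy - uy)) : ℤ × ℤ) ∈ Board m n ∧ s (vx, uy - (vy - uy)) = false)) :
    False := by
  have hsingle : Block (Board m n) s (vx, uy) ⊆ {((vx, uy) : ℤ × ℤ)} := by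
    intro q hq
    rcases (Relation.ReflTransGen.cases_head hq) with rfl | ⟨r, hstep, _⟩
    · exact rfl
    · exfalso
      obtain ⟨_, hrR, hadj, hshade⟩ := hstep
      obtain ⟨r1, r2⟩ := r
      have hadj' : (vx - r1).natAbs + (uy - r2).natAbs = 1 := hadj
      have henum : (r1 = ux ∧ r2 = uy) ∨ (r1 = vx ∧ r2 = vy) ∨
          (r1 = vx + (vx - ux) ∧ r2 = uy) ∨
          (r1 = vx ∧ r2 = uy - (vy - uy)) := by omega
      rw [hsw] at hshade
      rcases henum with ⟨he1, he2⟩ | ⟨he1, he2⟩ | ⟨he1, he2⟩ | ⟨he1, he2⟩ <;>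
        subst he1 <;> subst he2
      · rw [hsu] at hshade; exact absurd hshade (by simp)
      · rw [hsv'] at hshade; exact absurd hshade (by simp)
      · exact h3 ⟨hrR, hshade.symm⟩
      · exact h4 ⟨hrR, hshade.symm⟩
  have heq : Block (Board m n) s (vx, uy) = {((vx, uy) : ℤ × ℤ)} :=
    Set.Subset.antisymm hsingle (Set.singleton_subset_iff.mpr (block_self _))
  rw [heq, Set.ncard_singleton] at hcw
  omega

set_option maxHeartbeats 1000000 in
lemma coreH' {m n : ℕ} {s : ℤ × ℤ → Bool}
    (hrect : ∀ q ∈ Board m n, s q = true → IsRect (Block (Board m n) s q))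
    (hnrect : ∀ q ∈ Board m n, s q = false → ¬ IsRect (Block (Board m n) s q))
    {p : ℕ} (hp : p.Prime)
    (ux uy vx vy : ℤ) (w : ℤ × ℤ)
    (hu : ((ux, uy) : ℤ × ℤ) ∈ Board m n) (hv : ((vx, vy) : ℤ × ℤ) ∈ Board m n)
    (hw : w ∈ Board m n)
    (hcu : (Block (Board m n) s (ux, uy)).ncard = p)
    (hcv : (Block (Board m n) s (vx, vy)).ncard = p)
    (hcw : (Block (Board m n) s w).ncard = p)
    (hδ : (vx - ux).natAbs ≤ 1) (hε : (vy - uy).natAbs = 1)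
    (hsq : ∃ x y : ℤ, (ux = x ∨ ux = x + 1) ∧ (uy = y ∨ uy = y + 1) ∧
      (vx = x ∨ vx = x + 1) ∧ (vy = y ∨ vy = y + 1) ∧
      (w.1 = x ∨ w.1 = x + 1) ∧ (w.2 = y ∨ w.2 = y + 1))
    (hne_uw : ((ux, uy) : ℤ × ℤ) ≠ w) (hne_vw : ((vx, vy) : ℤ × ℤ) ≠ w)
    (hsu : s (ux, uy) = true)
    (a : ℤ) (hblk : Block (Board m n) s (ux, uy) = Hseg a (a + p - 1) uy)
    (hua : a ≤ ux) (hub : ux ≤ a + p - 1) : False := by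
  have hp2 := hp.two_le
  obtain ⟨hu1, hu2, hu3, hu4⟩ := hu
  obtain ⟨hv1, hv2, hv3, hv4⟩ := hv
  simp only at hu1 hu2 hu3 hu4 hv1 hv2 hv3 hv4
  have hu' : ((ux, uy) : ℤ × ℤ) ∈ Board m n := ⟨hu1, hu2, hu3, hu4⟩
  have hv' : ((vx, vy) : ℤ × ℤ) ∈ Board m n := ⟨hv1, hv2, hv3, hv4⟩
  -- side strip of u's block at row vy
  have hcells : ∀ t, a ≤ t → t ≤ a + p - 1 →
      ((t, vy) : ℤ × ℤ) ∈ Board m n ∧ s (t, vy) = false :=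
    hstrip_unshaded hu' hsu hblk (by simpa using hε) hv3 hv4
  by_cases hcase : a ≤ vx ∧ vx ≤ a + p - 1
  · exact hstrip_contra hnrect hu' hsu hblk (by omega) (by omega) (by simpa using hε)
      hv3 hv4 (vx, vy) hv' hcv hcase.1 hcase.2 rfl
  · -- v is diagonal to u
    have hvxne : vx = ux + 1 ∨ vx = ux - 1 := by omega
    have hvyne : vy = uy + 1 ∨ vy = uy - 1 := by omega
    -- determine w
    have hwcase : w = ((ux, vy) : ℤ × ℤ) ∨ w = ((vx, uy) : ℤ × ℤ) := by
      obtain ⟨wx, wy⟩ := w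
      obtain ⟨x, y, hsq1, hsq2, hsq3, hsq4, hsq5, hsq6⟩ := hsq
      simp only at hsq5 hsq6
      simp only [ne_eq, Prod.mk.injEq, not_and] at hne_uw hne_vw
      simp only [Prod.mk.injEq]
      omega
    rcases hwcase with hwc | hwc
    · subst hwc
      exact hstrip_contra hnrect hu' hsu hblk (by omega) (by omega) (by simpa using hε)
        hv3 hv4 (ux, vy) hw hcw hua hub rfl
    · subst hwc
      obtain ⟨hw1, hw2, hw3, hw4⟩ := hw
      simp only at hw1 hw2 hw3 hw4
      have hw' : ((vx, uy) : ℤ × ℤ) ∈ Board m n := ⟨hw1, hw2, hw3, hw4⟩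
      -- w is unshaded
      have hsw : s (vx, uy) = false := by
        cases hswb : s (vx, uy) with
        | false => rfl
        | true =>
          have : ((vx, uy) : ℤ × ℤ) ∈ Block (Board m n) s (ux, uy) := by
            refine block_closed (block_self _) hu' hw' ?_ (by rw [hsu, hswb])
            unfold CellAdj; simp only; omega
          rw [hblk] at this
          obtain ⟨hh1, hh2, _⟩ := this
          simp only at hh1 hh2
          omega
      by_cases hsv : s (vx, vy) = false
      · -- v unshaded : v attaches to the strip, block too big
        have hmemstrip : ((ux, vy) : ℤ × ℤ) ∈ Block (Board m n) s (vx, vy) := by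
          refine block_closed (block_self _) hv' (hcells ux hua hub).1 ?_
            (by rw [hsv, (hcells ux hua hub).2])
          unfold CellAdj; simp only; omega
        have hsub : insert ((vx, vy) : ℤ × ℤ) (Hseg a (a + p - 1) vy) ⊆
            Block (Board m n) s (vx, vy) := by
          rintro q hq
          rcases hq with rfl | hq
          · exact block_self _
          · obtain ⟨qx, qy⟩ := q
            obtain ⟨hq1, hq2, hq3⟩ := hq
            simp only at hq1 hq2 hq3
            subst hq3
            rw [← block_eq_of_mem hmemstrip]
            exact hseg_conn hcells ux qx hua hub hq1 hq2
        refine block_card_contra hv' hcv hsub ?_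
        rw [Set.ncard_insert_of_notMem (by rintro ⟨hh1, hh2, _⟩; simp only at hh1 hh2; omega)
          (hseg_finite _ _ _), hseg_ncard]
        omega
      · -- v shaded
        have hsv' : s (vx, vy) = true := by
          cases hsvb : s (vx, vy) with
          | false => exact absurd hsvb hsv
          | true => rfl
        rcases block_line hp (hrect _ hv' hsv') hcv with ⟨a', hblkv, hva, hvb⟩ |
          ⟨c', hblkv, hvc, hvd⟩
        · -- v's block horizontal : w sits in its side strip at row uy
          exact hstrip_contra hnrect hv' hsv' hblkv (by omega) (by omega) (by simp; omega)
            hu3 hu4 (vx, uy) hw' hcw hva hvb rfl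
        · -- v's block vertical
          simp only at hblkv hvc hvd
          have huyout : uy < c' ∨ c' + p - 1 < uy := by
            by_contra hcon
            push_neg at hcon
            have : ((vx, uy) : ℤ × ℤ) ∈ Block (Board m n) s (vx, vy) := by
              rw [hblkv]; exact ⟨rfl, by omega, by omega⟩
            have := block_shade this
            rw [hsw, hsv'] at this
            exact absurd this (by simp)
          by_cases h3 : ((vx + (vx - ux), uy) : ℤ × ℤ) ∈ Board m n ∧
              s (vx + (vx - ux), uy) = false
          · -- far-side strip of v's vertical block
            have hcells3 : ∀ t, c' ≤ t → t ≤ c' + p - 1 →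
                ((vx + (vx - ux), t) : ℤ × ℤ) ∈ Board m n ∧ s (vx + (vx - ux), t) = false :=
              vstrip_unshaded hv' hsv' hblkv (by simp; omega) (h3.1.1) (h3.1.2.1)
            have hn3 : ((vx + (vx - ux), uy) : ℤ × ℤ) ∈ Block (Board m n) s (vx, uy) := by
              refine block_closed (block_self _) hw' h3.1 ?_ (by rw [hsw, h3.2])
              unfold CellAdj; simp only; omega
            have hn3' : ((vx + (vx - ux), vy) : ℤ × ℤ) ∈ Block (Board m n) s (vx, uy) := by
              refine block_closed hn3 h3.1 (hcells3 vy hvc hvd).1 ?_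
                (by rw [h3.2, (hcells3 vy hvc hvd).2])
              unfold CellAdj; simp only; omega
            have hsub : insert ((vx, uy) : ℤ × ℤ) (insert ((vx + (vx - ux), uy) : ℤ × ℤ)
                (Vseg (vx + (vx - ux)) c' (c' + p - 1))) ⊆ Block (Board m n) s (vx, uy) := by
              rintro q hq
              rcases hq with rfl | hq
              · exact block_self _
              rcases hq with rfl | hq
              · exact hn3
              · obtain ⟨qx, qy⟩ := q
                obtain ⟨hq1, hq2, hq3⟩ := hq
                simp only at hq1 hq2 hq3
                subst hq1
                rw [← block_eq_of_mem hn3']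
                exact vseg_conn hcells3 vy qy hvc hvd hq2 hq3
            refine block_card_contra hw' hcw hsub ?_
            rw [Set.ncard_insert_of_notMem ?_ ((vseg_finite _ _ _).insert _),
              Set.ncard_insert_of_notMem ?_ (vseg_finite _ _ _), vseg_ncard]
            · omega
            · rintro ⟨hh1, hh2, _⟩; simp only at hh1 hh2; omega
            · rintro (hh | ⟨hh1, hh2, _⟩)
              · rw [Prod.mk.injEq] at hh; omega
              · simp only at hh1 hh2; omega
          · by_cases h4 : ((vx, uy - (vy - uy)) : ℤ × ℤ) ∈ Board m n ∧
                s (vx, uy - (vy - uy)) = false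
            · -- far-side strip of u's horizontal block
              have hcells4 : ∀ t, a ≤ t → t ≤ a + p - 1 →
                  ((t, uy - (vy - uy)) : ℤ × ℤ) ∈ Board m n ∧ s (t, uy - (vy - uy)) = false :=
                hstrip_unshaded hu' hsu hblk (by simp; omega) (h4.1.2.2.1) (h4.1.2.2.2)
              have hn4 : ((vx, uy - (vy - uy)) : ℤ × ℤ) ∈ Block (Board m n) s (vx, uy) := by
                refine block_closed (block_self _) hw' h4.1 ?_ (by rw [hsw, h4.2])
                unfold CellAdj; simp only; omega
              have hn4' : ((ux, uy - (vy - uy)) : ℤ × ℤ) ∈ Block (Board m n) s (vx, uy) := by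
                refine block_closed hn4 h4.1 (hcells4 ux hua hub).1 ?_
                  (by rw [h4.2, (hcells4 ux hua hub).2])
                unfold CellAdj; simp only; omega
              have hsub : insert ((vx, uy) : ℤ × ℤ) (insert ((vx, uy - (vy - uy)) : ℤ × ℤ)
                  (Hseg a (a + p - 1) (uy - (vy - uy)))) ⊆ Block (Board m n) s (vx, uy) := by
                rintro q hq
                rcases hq with rfl | hq
                · exact block_self _
                rcases hq with rfl | hq
                · exact hn4
                · obtain ⟨qx, qy⟩ := q
                  obtain ⟨hq1, hq2, hq3⟩ := hq
                  simp only at hq1 hq2 hq3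
                  subst hq3
                  rw [← block_eq_of_mem hn4']
                  exact hseg_conn hcells4 ux qx hua hub hq1 hq2
              refine block_card_contra hw' hcw hsub ?_
              rw [Set.ncard_insert_of_notMem ?_ ((hseg_finite _ _ _).insert _),
                Set.ncard_insert_of_notMem ?_ (hseg_finite _ _ _), hseg_ncard]
              · omega
              · rintro ⟨hh1, hh2, _⟩; simp only at hh1 hh2; omega
              · rintro (hh | ⟨hh1, hh2, hh3⟩)
                · rw [Prod.mk.injEq] at hh; omega
                · simp only at hh1 hh2 hh3; omega
            · exact isolated_contra hp2 ux uy vx vy hvxne hvyne hsu hsv' hsw hcw h3 h4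

/-! ### Dispatchers -/

lemma preimage_swap_vseg (x c d : ℤ) : Prod.swap ⁻¹' (Vseg x c d) = Hseg c d x := by
  ext ⟨q1, q2⟩
  simp only [Set.mem_preimage, Prod.swap_prod_mk, Vseg, Hseg, Set.mem_setOf_eq]
  tauto

lemma coreH {m n : ℕ} {s : ℤ × ℤ → Bool}
    (hrect : ∀ q ∈ Board m n, s q = true → IsRect (Block (Board m n) s q))
    (hnrect : ∀ q ∈ Board m n, s q = false → ¬ IsRect (Block (Board m n) s q))
    {p : ℕ} (hp : p.Prime)
    (u v w : ℤ × ℤ)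
    (hu : u ∈ Board m n) (hv : v ∈ Board m n) (hw : w ∈ Board m n)
    (hcu : (Block (Board m n) s u).ncard = p)
    (hcv : (Block (Board m n) s v).ncard = p)
    (hcw : (Block (Board m n) s w).ncard = p)
    (hsq : ∃ x y : ℤ, (u.1 = x ∨ u.1 = x + 1) ∧ (u.2 = y ∨ u.2 = y + 1) ∧
      (v.1 = x ∨ v.1 = x + 1) ∧ (v.2 = y ∨ v.2 = y + 1) ∧
      (w.1 = x ∨ w.1 = x + 1) ∧ (w.2 = y ∨ w.2 = y + 1))
    (hne_uv : u ≠ v) (hne_uw : u ≠ w) (hne_vw : v ≠ w)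
    (hsu : s u = true)
    (a : ℤ) (hblk : Block (Board m n) s u = Hseg a (a + p - 1) u.2)
    (hua : a ≤ u.1) (hub : u.1 ≤ a + p - 1) : False := by
  obtain ⟨ux, uy⟩ := u
  obtain ⟨vx, vy⟩ := v
  obtain ⟨wx, wy⟩ := w
  obtain ⟨x, y, hsq1, hsq2, hsq3, hsq4, hsq5, hsq6⟩ := hsq
  simp only at hsq1 hsq2 hsq3 hsq4 hsq5 hsq6 hua hub hblk
  simp only [ne_eq, Prod.mk.injEq, not_and] at hne_uv hne_uw hne_vw
  by_cases hrow : vy ≠ uy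
  · refine coreH' hrect hnrect hp ux uy vx vy (wx, wy) hu hv hw hcu hcv hcw
      (by omega) (by omega) ⟨x, y, hsq1, hsq2, hsq3, hsq4, by simpa using hsq5,
        by simpa using hsq6⟩ ?_ ?_ hsu a hblk hua hub
    · simp only [ne_eq, Prod.mk.injEq, not_and]; exact hne_uw
    · simp only [ne_eq, Prod.mk.injEq, not_and]; exact hne_vw
  · push_neg at hrow
    have hrow' : wy ≠ uy := by
      intro hcon
      -- then all three share a row within two columns: impossible
      omega
    refine coreH' hrect hnrect hp ux uy wx wy (vx, vy) hu hw hv hcu hcw hcv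
      (by omega) (by omega) ⟨x, y, hsq1, hsq2, hsq5, hsq6, by simpa using hsq3,
        by simpa using hsq4⟩ ?_ ?_ hsu a hblk hua hub
    · simp only [ne_eq, Prod.mk.injEq, not_and]; exact hne_uv
    · simp only [ne_eq, Prod.mk.injEq, not_and]
      intro h1 h2; exact hne_vw h1.symm h2.symm |>.elim

lemma core {m n : ℕ} {s : ℤ × ℤ → Bool}
    (hrect : ∀ q ∈ Board m n, s q = true → IsRect (Block (Board m n) s q))
    (hnrect : ∀ q ∈ Board m n, s q = false → ¬ IsRect (Block (Board m n) s q))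
    {p : ℕ} (hp : p.Prime)
    (u v w : ℤ × ℤ)
    (hu : u ∈ Board m n) (hv : v ∈ Board m n) (hw : w ∈ Board m n)
    (hcu : (Block (Board m n) s u).ncard = p)
    (hcv : (Block (Board m n) s v).ncard = p)
    (hcw : (Block (Board m n) s w).ncard = p)
    (hsq : ∃ x y : ℤ, (u.1 = x ∨ u.1 = x + 1) ∧ (u.2 = y ∨ u.2 = y + 1) ∧
      (v.1 = x ∨ v.1 = x + 1) ∧ (v.2 = y ∨ v.2 = y + 1) ∧
      (w.1 = x ∨ w.1 = x + 1) ∧ (w.2 = y ∨ w.2 = y + 1))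
    (hne_uv : u ≠ v) (hne_uw : u ≠ w) (hne_vw : v ≠ w)
    (hsu : s u = true) : False := by
  rcases block_line hp (hrect u hu hsu) hcu with ⟨a, hblk, hua, hub⟩ | ⟨c, hblk, hvc, hvd⟩
  · exact coreH hrect hnrect hp u v w hu hv hw hcu hcv hcw hsq hne_uv hne_uw hne_vw hsu
      a hblk hua hub
  · -- transpose the board
    have hrect' : ∀ q ∈ Board n m, (fun c => s c.swap) q = true →
        IsRect (Block (Board n m) (fun c => s c.swap) q) := by
      intro q hq hsq'
      rw [block_swap]
      exact isRect_preimage_swap (hrect q.swap (board_swap hq) hsq')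
    have hnrect' : ∀ q ∈ Board n m, (fun c => s c.swap) q = false →
        ¬ IsRect (Block (Board n m) (fun c => s c.swap) q) := by
      intro q hq hsq' hR
      rw [block_swap] at hR
      exact hnrect q.swap (board_swap hq) hsq' (isRect_swap_iff.mp hR)
    have hcard' : ∀ z : ℤ × ℤ, (Block (Board m n) s z.swap).ncard = p →
        (Block (Board n m) (fun c => s c.swap) z).ncard = p := by
      intro z hz
      rw [block_swap, ncard_preimage_swap]
      exact hz
    obtain ⟨x, y, hsq1, hsq2, hsq3, hsq4, hsq5, hsq6⟩ := hsq
    refine coreH hrect' hnrect' hp u.swap v.swap w.swap (board_swap hu) (board_swap hv)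
      (board_swap hw) (hcard' u.swap (by simpa using hcu)) (hcard' v.swap (by simpa using hcv))
      (hcard' w.swap (by simpa using hcw))
      ⟨y, x, by simpa using hsq2, by simpa using hsq1, by simpa using hsq4, by simpa using hsq3,
        by simpa using hsq6, by simpa using hsq5⟩
      (fun h => hne_uv (Prod.swap_injective h)) (fun h => hne_uw (Prod.swap_injective h))
      (fun h => hne_vw (Prod.swap_injective h)) (by simpa using hsu) c ?_ (by simpa using hvc)
      (by simpa using hvd)
    rw [block_swap]
    have : u.swap.swap = u := Prod.swap_swap u
    rw [this, hblk]
    rw [preimage_swap_vseg]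
    simp

/--
If a valid Choco Banana solution has three cells forming an L-tromino
(three distinct cells of some 2 × 2 square), each carrying the same prime clue `p`,
then all three cells are unshaded.
-/
theorem stmt_10 (m n : ℕ) (hm : 1 ≤ m) (hn : 1 ≤ n)
    (clue : ℤ × ℤ → Option ℕ) (s : ℤ × ℤ → Bool)
    (hvalid : ValidChocoBanana m n clue s)
    (c₁ c₂ c₃ : ℤ × ℤ) (p : ℕ) (hp : p.Prime)
    (h1 : c₁ ∈ Board m n) (h2 : c₂ ∈ Board m n) (h3 : c₃ ∈ Board m n)
    (hc1 : clue c₁ = some p) (hc2 : clue c₂ = some p) (hc3 : clue c₃ = some p)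
    (hne12 : c₁ ≠ c₂) (hne13 : c₁ ≠ c₃) (hne23 : c₂ ≠ c₃)
    (hL : ∃ x y : ℤ,
      (c₁.1 = x ∨ c₁.1 = x + 1) ∧ (c₁.2 = y ∨ c₁.2 = y + 1) ∧
      (c₂.1 = x ∨ c₂.1 = x + 1) ∧ (c₂.2 = y ∨ c₂.2 = y + 1) ∧
      (c₃.1 = x ∨ c₃.1 = x + 1) ∧ (c₃.2 = y ∨ c₃.2 = y + 1)) :
    s c₁ = false ∧ s c₂ = false ∧ s c₃ = false := by
  obtain ⟨hrect, hnrect, hclue⟩ := hvalid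
  have k1 := hclue c₁ h1 p hc1
  have k2 := hclue c₂ h2 p hc2
  have k3 := hclue c₃ h3 p hc3
  obtain ⟨x, y, q1, q2, q3, q4, q5, q6⟩ := hL
  refine ⟨?_, ?_, ?_⟩
  · cases hb : s c₁ with
    | false => rfl
    | true =>
      exact (core hrect hnrect hp c₁ c₂ c₃ h1 h2 h3 k1 k2 k3
        ⟨x, y, q1, q2, q3, q4, q5, q6⟩ hne12 hne13 hne23 hb).elim
  · cases hb : s c₂ with
    | false => rfl
    | true =>
      exact (core hrect hnrect hp c₂ c₁ c₃ h2 h1 h3 k2 k1 k3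
        ⟨x, y, q3, q4, q1, q2, q5, q6⟩ hne12.symm hne23 hne13 hb).elim
  · cases hb : s c₃ with
    | false => rfl
    | true =>
      exact (core hrect hnrect hp c₃ c₁ c₂ h3 h1 h2 k3 k1 k2
        ⟨x, y, q5, q6, q1, q2, q3, q4⟩ hne13.symm hne23.symm hne12 hb).elim
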